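/- Let N ∈ ℕ, let 0 < κ_1 < … < κ_N, let a_1, …, a_N > 0, set μ(s) = ∑_{n=1}^N a_n e^{−κ_n s} on Ω = (0,∞), and let u ∈ V be a nonzero vector. Then there exist real numbers x_1, …, x_N such that the two histories η_0(s) = u and η_N(s) = (∑_{m=1}^N x_m s^m) u are distinct elements of L²_μ((0,∞);V) satisfying ∫₀^∞ μ(t+s) η_0(s) ds = ∫₀^∞ μ(t+s) η_N(s) ds for every t ≥ 0. In particular, the map Λ, Λφ(t) = ∫₀^∞ μ(t+s)φ(s) ds, is not injective on L²_μ((0,∞);V). -/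

import Mathlib

open MeasureTheory Set Filter

lemma aux_int (k : ℕ) {b : ℝ} (hb : 0 < b) :
    IntegrableOn (fun s : ℝ => s ^ k * Real.exp (-(b * s))) (Ioi 0) := by
  have h := integrableOn_rpow_mul_exp_neg_mul_rpow (p := 1) (s := (k : ℝ))
    (by exact lt_of_lt_of_le neg_one_lt_zero (Nat.cast_nonneg k)) one_pos hb
  refine h.congr_fun (fun x hx => ?_) measurableSet_Ioi
  dsimp only
  rw [Real.rpow_one, Real.rpow_natCast, neg_mul]

lemma aux_val (k : ℕ) {b : ℝ} (hb : 0 < b) :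
    ∫ s in Ioi (0:ℝ), s ^ k * Real.exp (-(b * s)) = (k.factorial : ℝ) / b ^ (k + 1) := by
  have h := Real.integral_rpow_mul_exp_neg_mul_Ioi (a := (k : ℝ) + 1) (by positivity) hb
  rw [show ((k : ℝ) + 1 - 1) = (k : ℝ) by ring] at h
  rw [Real.Gamma_nat_eq_factorial] at h
  rw [show ((k : ℝ) + 1) = ((k + 1 : ℕ) : ℝ) by push_cast; ring, Real.rpow_natCast] at h
  have e : EqOn (fun s : ℝ => s ^ k * Real.exp (-(b * s)))
      (fun s : ℝ => s ^ (k : ℝ) * Real.exp (-(b * s))) (Ioi 0) := by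
    intro x hx
    dsimp only
    rw [Real.rpow_natCast]
  rw [setIntegral_congr_fun measurableSet_Ioi e, h, div_pow, one_pow]
  ring

lemma mexp_eqOn {b : ℝ} (t : ℝ) (k : ℕ) :
    EqOn (fun s : ℝ => s ^ k * Real.exp (-(b * (t + s))))
      (fun s : ℝ => Real.exp (-(b * t)) * (s ^ k * Real.exp (-(b * s)))) (Ioi 0) := by
  intro x hx
  dsimp only
  rw [show -(b * (t + x)) = -(b * t) + -(b * x) by ring, Real.exp_add]
  ring

lemma mexp_int {b : ℝ} (hb : 0 < b) (t : ℝ) (k : ℕ) :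
    IntegrableOn (fun s : ℝ => s ^ k * Real.exp (-(b * (t + s)))) (Ioi 0) := by
  have h : IntegrableOn
      (fun s : ℝ => Real.exp (-(b * t)) * (s ^ k * Real.exp (-(b * s)))) (Ioi 0) :=
    (aux_int k hb).const_mul _
  exact h.congr_fun (mexp_eqOn t k).symm measurableSet_Ioi

lemma mexp_val {b : ℝ} (hb : 0 < b) (t : ℝ) (k : ℕ) :
    ∫ s in Ioi (0:ℝ), s ^ k * Real.exp (-(b * (t + s))) =
      Real.exp (-(b * t)) * ((k.factorial : ℝ) / b ^ (k + 1)) := by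
  rw [setIntegral_congr_fun measurableSet_Ioi (mexp_eqOn t k),
    MeasureTheory.integral_const_mul, aux_val k hb]

lemma polyexp {b : ℝ} (hb : 0 < b) (q : Polynomial ℝ) :
    IntegrableOn (fun s : ℝ => q.eval s * Real.exp (-(b * s))) (Ioi 0) := by
  have h : ∀ s : ℝ, q.eval s * Real.exp (-(b * s)) =
      ∑ i ∈ Finset.range (q.natDegree + 1),
        q.coeff i * (s ^ i * Real.exp (-(b * s))) := by
    intro s
    rw [Polynomial.eval_eq_sum_range, Finset.sum_mul]
    exact Finset.sum_congr rfl fun i _ => by ring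
  simp_rw [h]
  exact MeasureTheory.integrable_finset_sum _ fun i _ => (aux_int i hb).const_mul _

lemma solve_system (N : ℕ) (κ : Fin N → ℝ) (hκpos : ∀ n, 0 < κ n) (hκmono : StrictMono κ) :
    ∃ x : Fin N → ℝ, ∀ n : Fin N,
      ∑ m : Fin N, (((m.1 + 1).factorial : ℝ) / κ n ^ (m.1 + 2)) * x m = (κ n)⁻¹ := by
  set y : Fin N → ℝ := fun n => (κ n)⁻¹ with hy
  set M : Matrix (Fin N) (Fin N) ℝ :=
    Matrix.of fun n m : Fin N => ((m.1 + 1).factorial : ℝ) / κ n ^ (m.1 + 2) with hM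
  have hMeq : M = Matrix.diagonal (fun n => y n ^ 2) * Matrix.vandermonde y *
      Matrix.diagonal (fun m : Fin N => ((m.1 + 1).factorial : ℝ)) := by
    ext n m
    rw [Matrix.mul_diagonal, Matrix.diagonal_mul]
    simp only [hM, Matrix.of_apply, Matrix.vandermonde_apply, hy]
    have h0 : κ n ≠ 0 := (hκpos n).ne'
    field_simp
    rw [one_div, inv_pow, pow_add]
    field_simp
  have hyinj : Function.Injective y := by
    intro i j h
    exact hκmono.injective (by
      have := hκpos i
      have := hκpos j
      simp only [hy, inv_inj] at h
      linarith [h])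
  have hdet : M.det ≠ 0 := by
    rw [hMeq, Matrix.det_mul, Matrix.det_mul, Matrix.det_diagonal, Matrix.det_diagonal,
      Matrix.det_vandermonde]
    refine mul_ne_zero (mul_ne_zero ?_ ?_) ?_
    · exact Finset.prod_ne_zero_iff.2 fun n _ => pow_ne_zero _ (inv_ne_zero (hκpos n).ne')
    · refine Finset.prod_ne_zero_iff.2 fun i _ => Finset.prod_ne_zero_iff.2 fun j hj => ?_
      refine sub_ne_zero.2 fun h => ?_
      have : j ≠ i := (Finset.mem_Ioi.1 hj).ne'
      exact this (hyinj h)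
    · exact Finset.prod_ne_zero_iff.2 fun m _ => Nat.cast_ne_zero.2 (Nat.factorial_ne_zero _)
  refine ⟨M⁻¹.mulVec y, fun n => ?_⟩
  have : M.mulVec (M⁻¹.mulVec y) = y := by
    rw [Matrix.mulVec_mulVec, Matrix.mul_nonsing_inv M (isUnit_iff_ne_zero.2 hdet),
      Matrix.one_mulVec]
  have hn := congrFun this n
  rw [Matrix.mulVec, dotProduct] at hn
  simpa [hM, hy] using hn

/-- Example `EXNN`. For the kernel
`μ(s) = ∑_{n=1}^N a_n e^{−κ_n s}` on `(0,∞)` and a nonzero `u ∈ V`, there exist reals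
`x_1, …, x_N` such that the histories `η₀(s) = u` and `η_N(s) = (∑ x_m s^m) u` are
distinct elements of `L²_μ((0,∞);V)` with `Λη₀(t) = Λη_N(t)` for every `t ≥ 0`;
hence `Λ` is not injective on `L²_μ((0,∞);V)`. -/
theorem stmt14
    {V : Type*} [NormedAddCommGroup V] [InnerProductSpace ℝ V] [CompleteSpace V]
    (N : ℕ) (hN : 0 < N) (κ a : Fin N → ℝ)
    (hκpos : ∀ n, 0 < κ n) (hκmono : StrictMono κ) (hapos : ∀ n, 0 < a n)
    (u : V) (hu : u ≠ 0) :
    ∃ x : Fin N → ℝ,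
      ¬ ((fun _ : ℝ => u) =ᵐ[volume.restrict (Ioi (0:ℝ))]
          (fun s : ℝ => (∑ m : Fin N, x m * s ^ (m.1 + 1)) • u)) ∧
      IntegrableOn
        (fun s : ℝ => (∑ n : Fin N, a n * Real.exp (-(κ n * s))) * ‖u‖ ^ 2)
        (Ioi 0) ∧
      IntegrableOn
        (fun s : ℝ => (∑ n : Fin N, a n * Real.exp (-(κ n * s))) *
          ‖(∑ m : Fin N, x m * s ^ (m.1 + 1)) • u‖ ^ 2) (Ioi 0) ∧
      ∀ t : ℝ, 0 ≤ t →
        (∫ s in Ioi (0:ℝ), (∑ n : Fin N, a n * Real.exp (-(κ n * (t + s)))) • u) =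
          ∫ s in Ioi (0:ℝ),
            (∑ n : Fin N, a n * Real.exp (-(κ n * (t + s)))) •
              ((∑ m : Fin N, x m * s ^ (m.1 + 1)) • u) := by
  obtain ⟨x, hx⟩ := solve_system N κ hκpos hκmono
  set P : Polynomial ℝ := ∑ m : Fin N, Polynomial.C (x m) * Polynomial.X ^ (m.1 + 1) with hPdef
  have hPeval : ∀ s : ℝ, P.eval s = ∑ m : Fin N, x m * s ^ (m.1 + 1) := by
    intro s
    simp [hPdef, Polynomial.eval_finset_sum]
  refine ⟨x, ?_, ?_, ?_, ?_⟩
  · -- distinctness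
    intro h
    have hQ : P - 1 ≠ 0 := by
      intro hq
      have h0 : (P - 1).eval 0 = 0 := by rw [hq]; simp
      rw [Polynomial.eval_sub, Polynomial.eval_one, hPeval] at h0
      simp at h0
    have hfin : {s : ℝ | (P - 1).IsRoot s}.Finite := Polynomial.finite_setOf_isRoot hQ
    have hsub : {s : ℝ | u = (∑ m : Fin N, x m * s ^ (m.1 + 1)) • u} ⊆
        {s : ℝ | (P - 1).IsRoot s} := by
      intro s hs
      have hs' : ((∑ m : Fin N, x m * s ^ (m.1 + 1)) - 1) • u = 0 := by
        rw [sub_smul, one_smul, ← hs, sub_self]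
      rcases smul_eq_zero.1 hs' with hc | hc
      · simp only [mem_setOf_eq, Polynomial.IsRoot, Polynomial.eval_sub,
          Polynomial.eval_one, hPeval]
        linarith [sub_eq_zero.1 hc]
      · exact absurd hc hu
    have h1 : volume.restrict (Ioi (0:ℝ))
        {s : ℝ | ¬ (u = (∑ m : Fin N, x m * s ^ (m.1 + 1)) • u)} = 0 := h
    have h2 : volume.restrict (Ioi (0:ℝ))
        {s : ℝ | u = (∑ m : Fin N, x m * s ^ (m.1 + 1)) • u} = 0 :=
      measure_mono_null hsub (hfin.measure_zero _)
    have h3 : volume.restrict (Ioi (0:ℝ)) (univ : Set ℝ) = 0 := by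
      have hle := measure_union_le (μ := volume.restrict (Ioi (0:ℝ)))
        {s : ℝ | u = (∑ m : Fin N, x m * s ^ (m.1 + 1)) • u}
        {s : ℝ | u = (∑ m : Fin N, x m * s ^ (m.1 + 1)) • u}ᶜ
      rw [union_compl_self, h2] at hle
      have : volume.restrict (Ioi (0:ℝ))
          {s : ℝ | u = (∑ m : Fin N, x m * s ^ (m.1 + 1)) • u}ᶜ = 0 := by
        rw [← h1]
        congr 1
      rw [this, add_zero] at hle
      exact le_antisymm hle (zero_le)
    rw [Measure.restrict_apply_univ, Real.volume_Ioi] at h3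
    simp at h3
  · -- integrability of μ * ‖u‖²
    apply Integrable.mul_const
    refine MeasureTheory.integrable_finset_sum _ fun n _ => ?_
    have h : IntegrableOn (fun s : ℝ => a n * Real.exp (-κ n * s)) (Ioi 0) :=
      (exp_neg_integrableOn_Ioi 0 (hκpos n)).const_mul (a n)
    exact h.congr_fun (fun s hs => by simp only [neg_mul]) measurableSet_Ioi
  · -- integrability of μ * ‖η_N‖²
    have key : IntegrableOn (fun s : ℝ =>
        (∑ n : Fin N, a n * ((P * P).eval s * Real.exp (-(κ n * s)))) * ‖u‖ ^ 2)
        (Ioi 0) := by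
      apply Integrable.mul_const
      exact MeasureTheory.integrable_finset_sum _ fun n _ =>
        (polyexp (hκpos n) (P * P)).const_mul (a n)
    refine key.congr_fun (fun s hs => ?_) measurableSet_Ioi
    have hPP : (P * P).eval s = P.eval s ^ 2 := by rw [Polynomial.eval_mul]; ring
    show (∑ n : Fin N, a n * ((P * P).eval s * Real.exp (-(κ n * s)))) * ‖u‖ ^ 2 = _
    rw [norm_smul, mul_pow, Real.norm_eq_abs, sq_abs, ← hPeval s, hPP,
      Finset.sum_mul, Finset.sum_mul]
    exact Finset.sum_congr rfl fun n _ => by ring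
  · -- the Λ equality
    intro t ht
    simp_rw [smul_smul]
    rw [integral_smul_const, integral_smul_const]
    congr 1
    have hint0 : ∀ n : Fin N,
        IntegrableOn (fun s : ℝ => a n * Real.exp (-(κ n * (t + s)))) (Ioi 0) := by
      intro n
      have h : IntegrableOn
          (fun s : ℝ => a n * (s ^ 0 * Real.exp (-(κ n * (t + s))))) (Ioi 0) :=
        (mexp_int (hκpos n) t 0).const_mul (a n)
      exact h.congr_fun (fun s hs => by simp only [pow_zero, one_mul]) measurableSet_Ioi
    have hv0 : ∀ n : Fin N, ∫ s in Ioi (0:ℝ), Real.exp (-(κ n * (t + s))) =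
        Real.exp (-(κ n * t)) * (κ n)⁻¹ := by
      intro n
      have h := mexp_val (hκpos n) t 0
      have e : EqOn (fun s : ℝ => Real.exp (-(κ n * (t + s))))
          (fun s : ℝ => s ^ 0 * Real.exp (-(κ n * (t + s)))) (Ioi 0) := by
        intro s hs; simp only [pow_zero, one_mul]
      rw [setIntegral_congr_fun measurableSet_Ioi e, h]
      norm_num
    have hL : ∫ s in Ioi (0:ℝ), (∑ n : Fin N, a n * Real.exp (-(κ n * (t + s)))) =
        ∑ n : Fin N, a n * (Real.exp (-(κ n * t)) * (κ n)⁻¹) := by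
      rw [MeasureTheory.integral_finset_sum _ fun n _ => hint0 n]
      exact Finset.sum_congr rfl fun n _ => by
        rw [MeasureTheory.integral_const_mul, hv0 n]
    have hexp : (fun s : ℝ => (∑ n : Fin N, a n * Real.exp (-(κ n * (t + s)))) *
        (∑ m : Fin N, x m * s ^ (m.1 + 1))) =
        fun s : ℝ => ∑ n : Fin N, ∑ m : Fin N,
          (a n * x m) * (s ^ (m.1 + 1) * Real.exp (-(κ n * (t + s)))) := by
      funext s
      rw [Finset.sum_mul_sum]
      exact Finset.sum_congr rfl fun n _ => Finset.sum_congr rfl fun m _ => by ring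
    have hR : ∫ s in Ioi (0:ℝ), (∑ n : Fin N, a n * Real.exp (-(κ n * (t + s)))) *
        (∑ m : Fin N, x m * s ^ (m.1 + 1)) =
        ∑ n : Fin N, ∑ m : Fin N, (a n * x m) *
          (Real.exp (-(κ n * t)) * (((m.1 + 1).factorial : ℝ) / κ n ^ (m.1 + 1 + 1))) := by
      rw [hexp, MeasureTheory.integral_finset_sum _ fun n _ =>
        MeasureTheory.integrable_finset_sum _ fun m _ =>
          (mexp_int (hκpos n) t (m.1 + 1)).const_mul _]
      refine Finset.sum_congr rfl fun n _ => ?_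
      rw [MeasureTheory.integral_finset_sum _ fun m _ =>
        (mexp_int (hκpos n) t (m.1 + 1)).const_mul _]
      exact Finset.sum_congr rfl fun m _ => by
        rw [MeasureTheory.integral_const_mul, mexp_val (hκpos n) t (m.1 + 1)]
    rw [hL, hR]
    refine Finset.sum_congr rfl fun n _ => Eq.symm ?_
    calc ∑ m : Fin N, (a n * x m) *
          (Real.exp (-(κ n * t)) * (((m.1 + 1).factorial : ℝ) / κ n ^ (m.1 + 1 + 1)))
        = (a n * Real.exp (-(κ n * t))) *
          ∑ m : Fin N, (((m.1 + 1).factorial : ℝ) / κ n ^ (m.1 + 2)) * x m := by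
          rw [Finset.mul_sum]
          exact Finset.sum_congr rfl fun m _ => by ring
      _ = a n * (Real.exp (-(κ n * t)) * (κ n)⁻¹) := by rw [hx n]; ring
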